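/- Let v ∈ V and ξ⋆ ∈ L²_ν(Ω;V), and define ξ(τ) = (∫_τ^ℓ e^{τ−s} μ(s) ds) · v + ∫_τ^ℓ e^{τ−s} ξ⋆(s) ds for τ ∈ Ω. Then ξ ∈ L²_ν(Ω;V) with ‖ξ‖²_{L²_ν} ≤ 2 M(0) ‖v‖²_V + 2‖ξ⋆‖²_{L²_ν}, and moreover lim_{τ→ℓ} ‖ξ(τ)‖_V = 0. -/

import Mathlib

open MeasureTheory Set Filter

lemma stmt7auxCont {E : Type*} [NormedAddCommGroup E] [NormedSpace ℝ E] [CompleteSpace E]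
    {Ω : Set ℝ} {f : ℝ → E} (hf : IntegrableOn f Ω) :
    Continuous (fun τ => ∫ s in Ω ∩ Ioi τ, f s) := by
  have key : ∀ τ : ℝ, ∫ s in Ω ∩ Ioi τ, f s = ∫ s in Ω, (Ioi τ).indicator f s :=
    fun τ => (setIntegral_indicator measurableSet_Ioi).symm
  simp_rw [key]
  rw [continuous_iff_continuousAt]
  intro τ₀
  have hae : ∀ᵐ s ∂(volume.restrict Ω), s ≠ τ₀ := by
    rw [ae_iff]
    have : {s : ℝ | ¬ s ≠ τ₀} = {τ₀} := by ext s; simp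
    rw [this]
    exact measure_mono_null (fun x hx => hx) (by simp [Measure.restrict_apply_le])
  apply continuousAt_of_dominated (bound := fun s => ‖f s‖)
  · exact Eventually.of_forall fun τ => hf.aestronglyMeasurable.indicator measurableSet_Ioi
  · exact Eventually.of_forall fun τ =>
      Eventually.of_forall fun s => norm_indicator_le_norm_self f s
  · exact hf.norm
  · filter_upwards [hae] with s hs
    rcases lt_or_gt_of_ne hs with h | h
    · have : (fun τ => (Ioi τ).indicator f s) =ᶠ[nhds τ₀] fun _ => (0 : E) := by
        filter_upwards [eventually_gt_nhds h] with τ hτ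
        exact indicator_of_notMem (by simpa using hτ.le) f
      exact this.continuousAt
    · have : (fun τ => (Ioi τ).indicator f s) =ᶠ[nhds τ₀] fun _ => f s := by
        filter_upwards [eventually_lt_nhds h] with τ hτ
        exact indicator_of_mem hτ f
      exact this.continuousAt

lemma stmt7auxTail {Ω : Set ℝ} {f : ℝ → ℝ} (hf : IntegrableOn f Ω) :
    Tendsto (fun τ => ∫ s in Ω ∩ Ioi τ, f s) atTop (nhds 0) := by
  have key : ∀ τ : ℝ, ∫ s in Ω ∩ Ioi τ, f s = ∫ s in Ω, (Ioi τ).indicator f s :=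
    fun τ => (setIntegral_indicator measurableSet_Ioi).symm
  simp_rw [key]
  have h0 : (0 : ℝ) = ∫ s in Ω, (0 : ℝ) := by simp
  rw [h0]
  apply tendsto_integral_filter_of_dominated_convergence (bound := fun s => ‖f s‖)
  · exact Eventually.of_forall fun τ => hf.aestronglyMeasurable.indicator measurableSet_Ioi
  · exact Eventually.of_forall fun τ =>
      Eventually.of_forall fun s => norm_indicator_le_norm_self f s
  · exact hf.norm
  · refine Eventually.of_forall fun s => ?_
    refine Tendsto.congr' ?_ tendsto_const_nhds
    filter_upwards [eventually_ge_atTop s] with τ hτ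
    exact (indicator_of_notMem (by simpa using hτ) f).symm

lemma stmt7auxCS {α : Type*} [MeasurableSpace α] {m : Measure α} {a b : α → ℝ}
    (ha0 : 0 ≤ᵐ[m] a) (hb0 : 0 ≤ᵐ[m] b) (ha : Integrable a m) (hb : Integrable b m) :
    ∫ x, Real.sqrt (a x) * Real.sqrt (b x) ∂m ≤
      Real.sqrt (∫ x, a x ∂m) * Real.sqrt (∫ x, b x ∂m) := by
  have hpq : Real.HolderConjugate 2 2 := Real.HolderConjugate.two_two
  have hma : MemLp (fun x => Real.sqrt (a x)) (ENNReal.ofReal 2) m := by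
    rw [show ENNReal.ofReal 2 = 2 by norm_num]
    rw [memLp_two_iff_integrable_sq
      (Real.continuous_sqrt.comp_aestronglyMeasurable ha.1)]
    refine ha.congr ?_
    filter_upwards [ha0] with x hx
    rw [Real.sq_sqrt hx]
  have hmb : MemLp (fun x => Real.sqrt (b x)) (ENNReal.ofReal 2) m := by
    rw [show ENNReal.ofReal 2 = 2 by norm_num]
    rw [memLp_two_iff_integrable_sq
      (Real.continuous_sqrt.comp_aestronglyMeasurable hb.1)]
    refine hb.congr ?_
    filter_upwards [hb0] with x hx
    rw [Real.sq_sqrt hx]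
  have := integral_mul_le_Lp_mul_Lq_of_nonneg hpq
    (Eventually.of_forall fun x => Real.sqrt_nonneg (a x))
    (Eventually.of_forall fun x => Real.sqrt_nonneg (b x)) hma hmb
  have h2a : ∫ x, Real.sqrt (a x) ^ (2:ℝ) ∂m = ∫ x, a x ∂m := by
    refine integral_congr_ae ?_
    filter_upwards [ha0] with x hx
    rw [show (2:ℝ) = ((2:ℕ):ℝ) by norm_num, Real.rpow_natCast, Real.sq_sqrt hx]
  have h2b : ∫ x, Real.sqrt (b x) ^ (2:ℝ) ∂m = ∫ x, b x ∂m := by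
    refine integral_congr_ae ?_
    filter_upwards [hb0] with x hx
    rw [show (2:ℝ) = ((2:ℕ):ℝ) by norm_num, Real.rpow_natCast, Real.sq_sqrt hx]
  rw [h2a, h2b] at this
  refine this.trans (le_of_eq ?_)
  rw [Real.sqrt_eq_rpow, Real.sqrt_eq_rpow]

theorem stmt7
    {V : Type*} [NormedAddCommGroup V] [InnerProductSpace ℝ V] [CompleteSpace V]
    (ℓ : EReal) (hℓ : 0 < ℓ)
    (Ω : Set ℝ) (hΩ : Ω = {s : ℝ | 0 < s ∧ (s : EReal) < ℓ})
    (μ : ℝ → ℝ)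
    (hμpos : ∀ s ∈ Ω, 0 < μ s)
    (hμmono : AntitoneOn μ Ω)
    (hμint : IntegrableOn μ Ω)
    (v : V) (ξs : ℝ → V)
    (hξsmeas : AEStronglyMeasurable ξs (volume.restrict Ω))
    (hξsL2 : IntegrableOn (fun s => (μ s)⁻¹ * ‖ξs s‖ ^ 2) Ω)
    (ξ : ℝ → V)
    (hξdef : ∀ τ ∈ Ω, ξ τ =
      (∫ s in Ω ∩ Ioi τ, Real.exp (τ - s) * μ s) • v +
        ∫ s in Ω ∩ Ioi τ, Real.exp (τ - s) • ξs s) :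
    IntegrableOn (fun τ => (μ τ)⁻¹ * ‖ξ τ‖ ^ 2) Ω ∧
      (∫ τ in Ω, (μ τ)⁻¹ * ‖ξ τ‖ ^ 2) ≤
        2 * (∫ σ in Ω, μ σ) * ‖v‖ ^ 2 + 2 * ∫ s in Ω, (μ s)⁻¹ * ‖ξs s‖ ^ 2 ∧
      Tendsto (fun τ => ‖ξ τ‖) (atTop ⊓ Filter.principal Ω) (nhds 0) := by
  set g : ℝ → ℝ := fun s => (μ s)⁻¹ * ‖ξs s‖ ^ 2 with hg_def
  -- structure of Ω
  have hΩcases : (ℓ = ⊤ ∧ Ω = Ioi 0) ∨ ∃ b : ℝ, Ω = Ioo 0 b := by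
    rcases eq_or_ne ℓ ⊤ with h | h
    · left
      refine ⟨h, ?_⟩
      rw [hΩ, h]
      ext s; simp
    · right
      refine ⟨ℓ.toReal, ?_⟩
      have hbot : ℓ ≠ ⊥ := ((lt_of_le_of_lt bot_le hℓ)).ne'
      rw [hΩ]
      ext s
      simp only [mem_setOf_eq, mem_Ioo]
      constructor
      · rintro ⟨h0, hlt⟩
        refine ⟨h0, ?_⟩
        rw [← EReal.coe_toReal h hbot] at hlt
        exact EReal.coe_lt_coe_iff.1 hlt
      · rintro ⟨h0, hlt⟩
        refine ⟨h0, ?_⟩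
        rw [← EReal.coe_toReal h hbot]
        exact EReal.coe_lt_coe_iff.2 hlt
  have hΩm : MeasurableSet Ω := by
    rcases hΩcases with ⟨_, h⟩ | ⟨b, h⟩
    · rw [h]; exact measurableSet_Ioi
    · rw [h]; exact measurableSet_Ioo
  have hSm : ∀ τ : ℝ, MeasurableSet (Ω ∩ Ioi τ) := fun τ => hΩm.inter measurableSet_Ioi
  have hμae : AEMeasurable μ (volume.restrict Ω) := aemeasurable_restrict_of_antitoneOn hΩm hμmono
  have hrle : ∀ τ : ℝ, volume.restrict (Ω ∩ Ioi τ) ≤ volume.restrict Ω :=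
    fun τ => Measure.restrict_mono inter_subset_left le_rfl
  have hg0 : ∀ s ∈ Ω, 0 ≤ g s := fun s hs =>
    mul_nonneg (inv_nonneg.2 (hμpos s hs).le) (sq_nonneg _)
  have hΩpos : ∀ s ∈ Ω, (0:ℝ) < s := by rw [hΩ]; exact fun s hs => hs.1
  have hexp_pos : ∀ τ s : ℝ, 0 < Real.exp (τ - s) := fun τ s => Real.exp_pos _
  have hexp_le1 : ∀ τ s : ℝ, τ ≤ s → Real.exp (τ - s) ≤ 1 := fun τ s h =>
    Real.exp_le_one_iff.2 (sub_nonpos.2 h)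
  have haeS : ∀ (τ : ℝ) (P : ℝ → Prop), (∀ s ∈ Ω ∩ Ioi τ, P s) →
      ∀ᵐ s ∂(volume.restrict (Ω ∩ Ioi τ)), P s :=
    fun τ P h => (ae_restrict_iff' (hSm τ)).2 (ae_of_all _ h)
  have haeΩ : ∀ (P : ℝ → Prop), (∀ s ∈ Ω, P s) → ∀ᵐ s ∂(volume.restrict Ω), P s :=
    fun P h => (ae_restrict_iff' hΩm).2 (ae_of_all _ h)
  -- integrability facts
  have hIμ : ∀ τ : ℝ, IntegrableOn μ (Ω ∩ Ioi τ) := fun τ => hμint.mono_set inter_subset_left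
  have hIg : ∀ τ : ℝ, IntegrableOn g (Ω ∩ Ioi τ) := fun τ => hξsL2.mono_set inter_subset_left
  have hIeμ : ∀ τ : ℝ, IntegrableOn (fun s => Real.exp (τ - s) * μ s) (Ω ∩ Ioi τ) := by
    intro τ
    refine Integrable.mono' (hIμ τ) ?_ ?_
    · exact ((Real.continuous_exp.comp (continuous_const.sub continuous_id)).aestronglyMeasurable).mul
        ((hμae.mono_measure (hrle τ)).aestronglyMeasurable)
    · refine haeS τ _ fun s hs => ?_
      rw [Real.norm_eq_abs, abs_mul, abs_of_pos (hexp_pos τ s), abs_of_pos (hμpos s hs.1)]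
      exact mul_le_of_le_one_left (hμpos s hs.1).le (hexp_le1 τ s hs.2.le)
  have hIeg : ∀ τ : ℝ, IntegrableOn (fun s => Real.exp (τ - s) * g s) (Ω ∩ Ioi τ) := by
    intro τ
    refine Integrable.mono' (hIg τ) ?_ ?_
    · exact ((Real.continuous_exp.comp (continuous_const.sub continuous_id)).aestronglyMeasurable).mul
        ((hξsL2.1).mono_measure (hrle τ))
    · refine haeS τ _ fun s hs => ?_
      rw [Real.norm_eq_abs, abs_mul, abs_of_pos (hexp_pos τ s), abs_of_nonneg (hg0 s hs.1)]
      exact mul_le_of_le_one_left (hg0 s hs.1) (hexp_le1 τ s hs.2.le)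
  have hξsq : ∀ s ∈ Ω, ‖ξs s‖ ^ 2 = μ s * g s := by
    intro s hs
    rw [hg_def]
    dsimp only
    rw [← mul_assoc, mul_inv_cancel₀ (hμpos s hs).ne', one_mul]
  have hIξn : IntegrableOn (fun s => ‖ξs s‖) Ω := by
    refine Integrable.mono' ((hμint.add hξsL2).div_const 2) hξsmeas.norm ?_
    refine haeΩ _ fun s hs => ?_
    have h1 := hξsq s hs
    have h2 := (hμpos s hs).le
    have h3 := hg0 s hs
    have h4 : (0:ℝ) ≤ ‖ξs s‖ := norm_nonneg _
    rw [norm_norm]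
    have hsq : (2 * ‖ξs s‖) ^ 2 ≤ (μ s + g s) ^ 2 := by nlinarith [sq_nonneg (μ s - g s)]
    have h2n : 2 * ‖ξs s‖ ≤ μ s + g s := by
      have hs2 := Real.sqrt_le_sqrt hsq
      rwa [Real.sqrt_sq (by positivity), Real.sqrt_sq (by linarith)] at hs2
    show ‖ξs s‖ ≤ (μ s + g s) / 2
    linarith
  have hIeξ : ∀ τ : ℝ, IntegrableOn (fun s => Real.exp (τ - s) • ξs s) (Ω ∩ Ioi τ) := by
    intro τ
    refine Integrable.mono' (hIξn.mono_set inter_subset_left) ?_ ?_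
    · exact ((Real.continuous_exp.comp (continuous_const.sub continuous_id)).aestronglyMeasurable).smul
        (hξsmeas.mono_measure (hrle τ))
    · refine haeS τ _ fun s hs => ?_
      rw [norm_smul, Real.norm_eq_abs, abs_of_pos (hexp_pos τ s)]
      exact mul_le_of_le_one_left (norm_nonneg _) (hexp_le1 τ s hs.2.le)
  -- exponential integrals
  have hexpint : ∀ τ : ℝ, IntegrableOn (fun s => Real.exp (τ - s)) (Ioi τ) := by
    intro τ
    have h := (exp_neg_integrableOn_Ioi τ one_pos).const_mul (Real.exp τ)
    refine h.congr (ae_of_all _ fun s => ?_)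
    dsimp only
    rw [← Real.exp_add]
    ring_nf
  have hexp1 : ∀ τ : ℝ, ∫ s in Ioi τ, Real.exp (τ - s) = 1 := by
    intro τ
    have h : ∀ s : ℝ, Real.exp (τ - s) = Real.exp τ * Real.exp (-s) := fun s => by
      rw [← Real.exp_add]; ring_nf
    simp_rw [h]
    rw [integral_const_mul, integral_exp_neg_Ioi, ← Real.exp_add, add_neg_cancel, Real.exp_zero]
  -- abbreviations
  set A : ℝ → ℝ := fun τ => ∫ s in Ω ∩ Ioi τ, Real.exp (τ - s) * μ s with hA_def
  set B : ℝ → V := fun τ => ∫ s in Ω ∩ Ioi τ, Real.exp (τ - s) • ξs s with hB_def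
  set C : ℝ → ℝ := fun τ => ∫ s in Ω ∩ Ioi τ, Real.exp (τ - s) * g s with hC_def
  have hξdef' : ∀ τ ∈ Ω, ξ τ = A τ • v + B τ := hξdef
  have hA0 : ∀ τ, 0 ≤ A τ := fun τ =>
    setIntegral_nonneg (hSm τ) fun s hs => mul_nonneg (hexp_pos τ s).le (hμpos s hs.1).le
  have hC0 : ∀ τ, 0 ≤ C τ := fun τ =>
    setIntegral_nonneg (hSm τ) fun s hs => mul_nonneg (hexp_pos τ s).le (hg0 s hs.1)
  have hAleμ : ∀ τ ∈ Ω, A τ ≤ μ τ := by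
    intro τ hτ
    have step1 : A τ ≤ ∫ s in Ω ∩ Ioi τ, Real.exp (τ - s) * μ τ := by
      refine setIntegral_mono_on (hIeμ τ)
        (((hexpint τ).mono_set inter_subset_right).mul_const (μ τ)) (hSm τ) ?_
      exact fun s hs => mul_le_mul_of_nonneg_left (hμmono hτ hs.1 hs.2.le) (hexp_pos τ s).le
    have step2 : ∫ s in Ω ∩ Ioi τ, Real.exp (τ - s) * μ τ ≤
        ∫ s in Ioi τ, Real.exp (τ - s) * μ τ := by
      refine setIntegral_mono_set ((hexpint τ).mul_const (μ τ))
        (ae_of_all _ fun s => mul_nonneg (hexp_pos τ s).le (hμpos τ hτ).le)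
        (HasSubset.Subset.eventuallyLE inter_subset_right)
    have step3 : ∫ s in Ioi τ, Real.exp (τ - s) * μ τ = μ τ := by
      rw [integral_mul_const, hexp1 τ, one_mul]
    linarith
  have hBle : ∀ τ : ℝ, ‖B τ‖ ≤ Real.sqrt (A τ) * Real.sqrt (C τ) := by
    intro τ
    have h1 : ‖B τ‖ ≤ ∫ s in Ω ∩ Ioi τ, ‖Real.exp (τ - s) • ξs s‖ :=
      norm_integral_le_integral_norm _
    have h2 : ∫ s in Ω ∩ Ioi τ, ‖Real.exp (τ - s) • ξs s‖ =
        ∫ s in Ω ∩ Ioi τ, Real.sqrt (Real.exp (τ - s) * μ s) * Real.sqrt (Real.exp (τ - s) * g s) := by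
      refine integral_congr_ae (haeS τ _ fun s hs => ?_)
      dsimp only
      have hμs := hμpos s hs.1
      rw [← Real.sqrt_mul (mul_nonneg (hexp_pos τ s).le hμs.le)]
      have he : Real.exp (τ - s) * μ s * (Real.exp (τ - s) * g s) =
          (Real.exp (τ - s) * ‖ξs s‖) ^ 2 := by
        rw [hg_def]
        field_simp
      rw [he, Real.sqrt_sq (mul_nonneg (hexp_pos τ s).le (norm_nonneg _)), norm_smul,
        Real.norm_eq_abs, abs_of_pos (hexp_pos τ s)]
    have h3 := stmt7auxCS
      (haeS τ _ fun s hs => mul_nonneg (hexp_pos τ s).le (hμpos s hs.1).le)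
      (haeS τ _ fun s hs => mul_nonneg (hexp_pos τ s).le (hg0 s hs.1))
      (hIeμ τ) (hIeg τ)
    rw [h2] at h1
    exact h1.trans h3
  have hξle : ∀ τ ∈ Ω, ‖ξ τ‖ ≤ A τ * ‖v‖ + ‖B τ‖ := by
    intro τ hτ
    rw [hξdef' τ hτ]
    refine (norm_add_le _ _).trans ?_
    rw [norm_smul, Real.norm_eq_abs, abs_of_nonneg (hA0 τ)]
  have hB2 : ∀ τ : ℝ, ‖B τ‖ ^ 2 ≤ A τ * C τ := by
    intro τ
    calc ‖B τ‖ ^ 2 ≤ (Real.sqrt (A τ) * Real.sqrt (C τ)) ^ 2 :=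
          pow_le_pow_left₀ (norm_nonneg _) (hBle τ) 2
      _ = A τ * C τ := by rw [mul_pow, Real.sq_sqrt (hA0 τ), Real.sq_sqrt (hC0 τ)]
  have hmain : ∀ τ ∈ Ω, (μ τ)⁻¹ * ‖ξ τ‖ ^ 2 ≤ 2 * μ τ * ‖v‖ ^ 2 + 2 * C τ := by
    intro τ hτ
    have hμτ := hμpos τ hτ
    rw [inv_mul_le_iff₀ hμτ]
    have h1 := hξle τ hτ
    have h2 := hB2 τ
    have h3 := hA0 τ
    have h4 := hC0 τ
    have h5 := hAleμ τ hτ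
    have h6 : (0:ℝ) ≤ ‖B τ‖ := norm_nonneg _
    have h7 : (0:ℝ) ≤ ‖v‖ := norm_nonneg _
    have h8 : (0:ℝ) ≤ ‖ξ τ‖ := norm_nonneg _
    nlinarith [sq_nonneg (A τ * ‖v‖ - ‖B τ‖), mul_le_mul_of_nonneg_right h5 h4,
      mul_self_le_mul_self h3 h5, mul_le_mul_of_nonneg_left h1 h8,
      mul_le_mul_of_nonneg_right h1 (add_nonneg (mul_nonneg h3 h7) h6)]
  -- measurability of ξ on Ω
  have hμexpint : IntegrableOn (fun s => Real.exp (-s) * μ s) Ω := by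
    refine Integrable.mono' hμint
      (((Real.continuous_exp.comp continuous_neg).aestronglyMeasurable).mul
        hμae.aestronglyMeasurable) (haeΩ _ fun s hs => ?_)
    rw [Real.norm_eq_abs, abs_mul, abs_of_pos (Real.exp_pos _), abs_of_pos (hμpos s hs)]
    exact mul_le_of_le_one_left (hμpos s hs).le
      (Real.exp_le_one_iff.2 (neg_nonpos.2 (hΩpos s hs).le))
  have hξexpint : IntegrableOn (fun s => Real.exp (-s) • ξs s) Ω := by
    refine Integrable.mono' hIξn
      (((Real.continuous_exp.comp continuous_neg).aestronglyMeasurable).smul hξsmeas)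
      (haeΩ _ fun s hs => ?_)
    rw [norm_smul, Real.norm_eq_abs, abs_of_pos (Real.exp_pos _)]
    exact mul_le_of_le_one_left (norm_nonneg _)
      (Real.exp_le_one_iff.2 (neg_nonpos.2 (hΩpos s hs).le))
  have hPcont : Continuous (fun τ => ∫ s in Ω ∩ Ioi τ, Real.exp (-s) * μ s) :=
    stmt7auxCont hμexpint
  have hQcont : Continuous (fun τ => ∫ s in Ω ∩ Ioi τ, Real.exp (-s) • ξs s) :=
    stmt7auxCont hξexpint
  have hAP : ∀ τ : ℝ, A τ = Real.exp τ * ∫ s in Ω ∩ Ioi τ, Real.exp (-s) * μ s := by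
    intro τ
    rw [hA_def, ← integral_const_mul]
    refine integral_congr_ae (ae_of_all _ fun s => ?_)
    dsimp only
    rw [← mul_assoc, ← Real.exp_add]
    ring_nf
  have hBQ : ∀ τ : ℝ, B τ = Real.exp τ • ∫ s in Ω ∩ Ioi τ, Real.exp (-s) • ξs s := by
    intro τ
    rw [hB_def, ← integral_smul]
    refine integral_congr_ae (ae_of_all _ fun s => ?_)
    dsimp only
    rw [smul_smul, ← Real.exp_add]
    ring_nf
  have hξmeas : AEStronglyMeasurable ξ (volume.restrict Ω) := by
    have hφcont : Continuous (fun τ =>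
        (Real.exp τ * ∫ s in Ω ∩ Ioi τ, Real.exp (-s) * μ s) • v +
          Real.exp τ • ∫ s in Ω ∩ Ioi τ, Real.exp (-s) • ξs s) :=
      ((Real.continuous_exp.mul hPcont).smul continuous_const).add
        (Real.continuous_exp.smul hQcont)
    refine hφcont.aestronglyMeasurable.congr (haeΩ _ fun τ hτ => ?_)
    rw [hξdef' τ hτ, hAP τ, hBQ τ]
  have hξm2 : AEMeasurable (fun τ => (μ τ)⁻¹ * ‖ξ τ‖ ^ 2) (volume.restrict Ω) :=
    (hμae.inv).mul ((hξmeas.norm.aemeasurable).pow_const 2)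
  have hh0 : 0 ≤ᵐ[volume.restrict Ω] fun τ => (μ τ)⁻¹ * ‖ξ τ‖ ^ 2 :=
    haeΩ _ fun τ hτ => mul_nonneg (inv_nonneg.2 (hμpos τ hτ).le) (sq_nonneg _)
  have hK1 : 0 ≤ ∫ σ in Ω, μ σ := setIntegral_nonneg hΩm fun s hs => (hμpos s hs).le
  have hK2 : 0 ≤ ∫ s in Ω, g s := setIntegral_nonneg hΩm hg0
  -- the Fubini bound
  have hCbound : ∫⁻ τ in Ω, ENNReal.ofReal (C τ) ≤ ENNReal.ofReal (∫ s in Ω, g s) := by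
    have hgae : AEMeasurable (fun s => ENNReal.ofReal (g s)) (volume.restrict Ω) :=
      ENNReal.measurable_ofReal.comp_aemeasurable hξsL2.1.aemeasurable
    obtain ⟨G, hGm, hGeq⟩ : ∃ G : ℝ → ENNReal, Measurable G ∧
        (fun s => ENNReal.ofReal (g s)) =ᵐ[volume.restrict Ω] G :=
      ⟨hgae.mk _, hgae.measurable_mk, hgae.ae_eq_mk⟩
    set k : ℝ → ℝ → ENNReal := fun τ s =>
      if τ < s then ENNReal.ofReal (Real.exp (τ - s)) * G s else 0 with hk_def
    have hstep : ∀ τ : ℝ, ENNReal.ofReal (C τ) = ∫⁻ s in Ω, k τ s := by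
      intro τ
      rw [hC_def]
      dsimp only
      rw [ofReal_integral_eq_lintegral_ofReal (hIeg τ)
        (haeS τ _ fun s hs => mul_nonneg (hexp_pos τ s).le (hg0 s hs.1))]
      rw [show volume.restrict (Ω ∩ Ioi τ) = (volume.restrict Ω).restrict (Ioi τ) by
        rw [Measure.restrict_restrict measurableSet_Ioi, inter_comm]]
      rw [← lintegral_indicator measurableSet_Ioi]
      refine lintegral_congr_ae ?_
      filter_upwards [hGeq] with s hsG
      simp only [hk_def, Set.indicator_apply, mem_Ioi]
      by_cases h : τ < s
      · rw [if_pos h, if_pos h, ENNReal.ofReal_mul (hexp_pos τ s).le, hsG]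
      · rw [if_neg h, if_neg h]
    have hkm : Measurable (Function.uncurry k) := by
      have : Function.uncurry k = fun p : ℝ × ℝ =>
          if p.1 < p.2 then ENNReal.ofReal (Real.exp (p.1 - p.2)) * G p.2 else 0 := rfl
      rw [this]
      refine Measurable.ite (measurableSet_lt measurable_fst measurable_snd) ?_ measurable_const
      exact (ENNReal.measurable_ofReal.comp
        ((Real.continuous_exp.comp (continuous_fst.sub continuous_snd)).measurable)).mul
        (hGm.comp measurable_snd)
    calc ∫⁻ τ in Ω, ENNReal.ofReal (C τ) = ∫⁻ τ in Ω, ∫⁻ s in Ω, k τ s :=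
          lintegral_congr fun τ => hstep τ
      _ = ∫⁻ s in Ω, ∫⁻ τ in Ω, k τ s :=
          lintegral_lintegral_swap hkm.aemeasurable
      _ ≤ ∫⁻ s in Ω, G s := by
          refine lintegral_mono fun s => ?_
          have hrw : ∀ τ : ℝ, k τ s =
              (Iio s).indicator (fun τ => ENNReal.ofReal (Real.exp (τ - s))) τ * G s := by
            intro τ
            simp only [hk_def, Set.indicator_apply, mem_Iio]
            by_cases h : τ < s
            · rw [if_pos h, if_pos h]
            · rw [if_neg h, if_neg h, zero_mul]
          simp_rw [hrw]
          have hmIio : Measurable (fun τ : ℝ =>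
              (Iio s).indicator (fun τ => ENNReal.ofReal (Real.exp (τ - s))) τ) :=
            Measurable.indicator (ENNReal.measurable_ofReal.comp
              ((Real.continuous_exp.comp (continuous_sub_right s)).measurable))
              measurableSet_Iio
          rw [lintegral_mul_const _ hmIio]
          have hle1 : ∫⁻ τ in Ω, (Iio s).indicator
              (fun τ => ENNReal.ofReal (Real.exp (τ - s))) τ ≤ 1 := by
            calc ∫⁻ τ in Ω, (Iio s).indicator (fun τ => ENNReal.ofReal (Real.exp (τ - s))) τ
                ≤ ∫⁻ τ, (Iio s).indicator (fun τ => ENNReal.ofReal (Real.exp (τ - s))) τ :=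
                  lintegral_mono' Measure.restrict_le_self le_rfl
              _ = ∫⁻ τ in Iio s, ENNReal.ofReal (Real.exp (τ - s)) :=
                  lintegral_indicator measurableSet_Iio _
              _ = ENNReal.ofReal (∫ τ in Iio s, Real.exp (τ - s)) := by
                  rw [ofReal_integral_eq_lintegral_ofReal]
                  · refine (((integrableOn_exp_Iic s).mono_set Iio_subset_Iic_self).mul_const
                      (Real.exp (-s))).congr (ae_of_all _ fun τ => ?_)
                    dsimp only
                    rw [← Real.exp_add]; ring_nf
                  · exact ae_of_all _ fun τ => (Real.exp_pos _).le
              _ = 1 := by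
                  have : ∫ τ in Iio s, Real.exp (τ - s) = 1 := by
                    have h : ∀ τ : ℝ, Real.exp (τ - s) = Real.exp τ * Real.exp (-s) :=
                      fun τ => by rw [← Real.exp_add]; ring_nf
                    simp_rw [h]
                    rw [integral_mul_const, MeasureTheory.restrict_Iio_eq_restrict_Iic,
                      integral_exp_Iic, ← Real.exp_add, add_neg_cancel, Real.exp_zero]
                  rw [this, ENNReal.ofReal_one]
          calc (∫⁻ τ in Ω, (Iio s).indicator
              (fun τ => ENNReal.ofReal (Real.exp (τ - s))) τ) * G s ≤ 1 * G s :=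
                mul_le_mul_left hle1 _
            _ = G s := one_mul _
      _ = ∫⁻ s in Ω, ENNReal.ofReal (g s) := (lintegral_congr_ae hGeq).symm
      _ = ENNReal.ofReal (∫ s in Ω, g s) :=
          (ofReal_integral_eq_lintegral_ofReal hξsL2 (haeΩ _ hg0)).symm
  -- main lintegral estimate
  have hlint : ∫⁻ τ in Ω, ENNReal.ofReal ((μ τ)⁻¹ * ‖ξ τ‖ ^ 2) ≤
      ENNReal.ofReal (2 * (∫ σ in Ω, μ σ) * ‖v‖ ^ 2 + 2 * ∫ s in Ω, g s) := by
    have step1 : ∫⁻ τ in Ω, ENNReal.ofReal ((μ τ)⁻¹ * ‖ξ τ‖ ^ 2) ≤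
        ∫⁻ τ in Ω, (ENNReal.ofReal (2 * μ τ * ‖v‖ ^ 2) + ENNReal.ofReal (2 * C τ)) := by
      refine lintegral_mono_ae (haeΩ _ fun τ hτ => ?_)
      exact (ENNReal.ofReal_le_ofReal (hmain τ hτ)).trans ENNReal.ofReal_add_le
    refine step1.trans ?_
    have hm1 : AEMeasurable (fun τ => ENNReal.ofReal (2 * μ τ * ‖v‖ ^ 2)) (volume.restrict Ω) :=
      ENNReal.measurable_ofReal.comp_aemeasurable
        (((aemeasurable_const.mul hμae)).mul aemeasurable_const)
    rw [lintegral_add_left' hm1]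
    have t1 : ∫⁻ τ in Ω, ENNReal.ofReal (2 * μ τ * ‖v‖ ^ 2) =
        ENNReal.ofReal (2 * (∫ σ in Ω, μ σ) * ‖v‖ ^ 2) := by
      rw [← ofReal_integral_eq_lintegral_ofReal ((hμint.const_mul 2).mul_const (‖v‖ ^ 2))
        (haeΩ _ fun τ hτ => mul_nonneg (mul_nonneg two_pos.le (hμpos τ hτ).le) (sq_nonneg _))]
      congr 1
      rw [integral_mul_const, integral_const_mul]
    have t2 : ∫⁻ τ in Ω, ENNReal.ofReal (2 * C τ) ≤ ENNReal.ofReal (2 * ∫ s in Ω, g s) := by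
      have : ∀ τ : ℝ, ENNReal.ofReal (2 * C τ) = ENNReal.ofReal 2 * ENNReal.ofReal (C τ) :=
        fun τ => ENNReal.ofReal_mul two_pos.le
      simp_rw [this]
      rw [lintegral_const_mul' _ _ ENNReal.ofReal_ne_top]
      calc ENNReal.ofReal 2 * ∫⁻ τ in Ω, ENNReal.ofReal (C τ)
          ≤ ENNReal.ofReal 2 * ENNReal.ofReal (∫ s in Ω, g s) := mul_le_mul_right hCbound _
        _ = ENNReal.ofReal (2 * ∫ s in Ω, g s) := (ENNReal.ofReal_mul two_pos.le).symm
    rw [t1]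
    refine (add_le_add_right t2 _).trans ?_
    rw [← ENNReal.ofReal_add (by positivity) (by positivity)]
  have hInt : IntegrableOn (fun τ => (μ τ)⁻¹ * ‖ξ τ‖ ^ 2) Ω := by
    refine ⟨hξm2.aestronglyMeasurable, ?_⟩
    rw [hasFiniteIntegral_iff_ofReal hh0]
    exact lt_of_le_of_lt hlint ENNReal.ofReal_lt_top
  refine ⟨hInt, ?_, ?_⟩
  · rw [integral_eq_lintegral_of_nonneg_ae hh0 hξm2.aestronglyMeasurable]
    exact ENNReal.toReal_le_of_le_ofReal (by positivity) hlint
  -- the limit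
  · rcases hΩcases with ⟨hltop, hΩeq⟩ | ⟨b, hΩeq⟩
    · -- ℓ = ⊤, Ω = Ioi 0
      have hMt := stmt7auxTail hμint
      have hD := stmt7auxTail hξsL2
      have h1Ω : (1:ℝ) ∈ Ω := by rw [hΩeq]; exact mem_Ioi.2 one_pos
      have hlim : Tendsto (fun τ => (∫ s in Ω ∩ Ioi τ, μ s) * ‖v‖ +
          Real.sqrt (μ 1 * ∫ s in Ω ∩ Ioi τ, g s)) atTop (nhds 0) := by
        have h1 := hMt.mul_const ‖v‖
        have h2 : Tendsto (fun τ => Real.sqrt (μ 1 * ∫ s in Ω ∩ Ioi τ, g s)) atTop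
            (nhds (Real.sqrt (μ 1 * 0))) :=
          (Real.continuous_sqrt.tendsto _).comp (hD.const_mul (μ 1))
        have := h1.add h2
        simpa using this
      refine squeeze_zero' (Eventually.of_forall fun τ => norm_nonneg _) ?_
        (hlim.mono_left inf_le_left)
      have hev1 : ∀ᶠ τ in atTop ⊓ Filter.principal Ω, τ ∈ Ω :=
        (eventually_principal.2 fun τ h => h).filter_mono inf_le_right
      have hev2 : ∀ᶠ τ in atTop ⊓ Filter.principal Ω, (1:ℝ) ≤ τ :=
        (eventually_ge_atTop 1).filter_mono inf_le_left
      filter_upwards [hev1, hev2] with τ hτΩ hτ1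
      have hA_le_Mt : A τ ≤ ∫ s in Ω ∩ Ioi τ, μ s :=
        setIntegral_mono_on (hIeμ τ) (hIμ τ) (hSm τ) fun s hs =>
          mul_le_of_le_one_left (hμpos s hs.1).le (hexp_le1 τ s hs.2.le)
      have hCD : C τ ≤ ∫ s in Ω ∩ Ioi τ, g s :=
        setIntegral_mono_on (hIeg τ) (hIg τ) (hSm τ) fun s hs =>
          mul_le_of_le_one_left (hg0 s hs.1) (hexp_le1 τ s hs.2.le)
      have hD0 : 0 ≤ ∫ s in Ω ∩ Ioi τ, g s :=
        setIntegral_nonneg (hSm τ) fun s hs => hg0 s hs.1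
      have hμ1τ : μ τ ≤ μ 1 := hμmono h1Ω hτΩ hτ1
      calc ‖ξ τ‖ ≤ A τ * ‖v‖ + ‖B τ‖ := hξle τ hτΩ
        _ ≤ (∫ s in Ω ∩ Ioi τ, μ s) * ‖v‖ +
            Real.sqrt (μ 1 * ∫ s in Ω ∩ Ioi τ, g s) := by
          refine add_le_add (mul_le_mul_of_nonneg_right hA_le_Mt (norm_nonneg v)) ?_
          have h1 : ‖B τ‖ ≤ Real.sqrt (A τ * C τ) := by
            rw [Real.sqrt_mul (hA0 τ)]
            exact hBle τ
          refine h1.trans (Real.sqrt_le_sqrt ?_)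
          exact mul_le_mul ((hAleμ τ hτΩ).trans hμ1τ) hCD (hC0 τ) (hμpos 1 h1Ω).le
    · -- Ω bounded: the filter is trivial
      have hbot : atTop ⊓ Filter.principal Ω = ⊥ := by
        rw [inf_principal_eq_bot]
        filter_upwards [eventually_ge_atTop b] with τ hτ
        rw [hΩeq]
        exact fun h => absurd h.2 (not_lt.2 hτ)
      rw [hbot]
      exact tendsto_bot
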